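/- There is no graph G whose i-graph is isomorphic to the diamond graph K₄ − e. -/

import Mathlib

open Finset

variable {V : Type*}

/-- `S` is an independent dominating (equivalently, maximal independent) set of `G`. -/
def IndepDom (G : SimpleGraph V) (S : Finset V) : Prop :=
  (∀ ⦃x⦄, x ∈ S → ∀ ⦃y⦄, y ∈ S → ¬ G.Adj x y) ∧ ∀ v, v ∉ S → ∃ u ∈ S, G.Adj u v

/-- The independent domination number `i(G)`. -/
noncomputable def iNum (G : SimpleGraph V) : ℕ :=
  sInf {n | ∃ S : Finset V, IndepDom G S ∧ S.card = n}

/-- An `i`-set: a maximal independent set of minimum cardinality. -/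
def IsISet (G : SimpleGraph V) (S : Finset V) : Prop :=
  IndepDom G S ∧ S.card = iNum G

/-- The `i`-graph of `G`: vertices are the `i`-sets of `G`, two of them adjacent iff their
symmetric difference is a pair of adjacent vertices of `G`. -/
def iGraph (G : SimpleGraph V) [DecidableEq V] : SimpleGraph {S : Finset V // IsISet G S} where
  Adj X Y := ∃ x y, G.Adj x y ∧ symmDiff X.1 Y.1 = {x, y}
  symm := by
    constructor
    rintro X Y ⟨x, y, hxy, h⟩
    exact ⟨x, y, hxy, by rwa [symmDiff_comm]⟩
  loopless := by
    constructor
    rintro X ⟨x, y, hxy, h⟩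
    rw [symmDiff_self] at h
    exact (Finset.insert_ne_empty x {y}) (by simpa [eq_comm] using h)

/-- The diamond graph `K₄ − e` on vertices `0,1,2,3`, missing only the edge `01`. -/
def diamondGraph : SimpleGraph (Fin 4) :=
  SimpleGraph.fromEdgeSet {s(0,2), s(0,3), s(1,2), s(1,3), s(2,3)}

lemma adj_struct_aux [DecidableEq V] {G : SimpleGraph V} {X Y : Finset V}
    (hXind : ∀ ⦃a⦄, a ∈ X → ∀ ⦃b⦄, b ∈ X → ¬ G.Adj a b)
    {u v : V} (huv : G.Adj u v) (hs : symmDiff X Y = {u, v})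
    (hu1 : u ∈ X) (hu2 : u ∉ Y) : X \ Y = {u} ∧ Y \ X = {v} := by
  have hv : v ∈ symmDiff X Y := by rw [hs]; simp
  rw [Finset.mem_symmDiff] at hv
  have hvY : v ∈ Y ∧ v ∉ X := by
    rcases hv with ⟨hv1, _⟩ | hv
    · exact absurd huv (hXind hu1 hv1)
    · exact hv
  constructor
  · apply Finset.Subset.antisymm
    · intro w hw
      rw [Finset.mem_sdiff] at hw
      have hws : w ∈ symmDiff X Y := by
        rw [Finset.mem_symmDiff]; exact Or.inl hw
      rw [hs] at hws
      rcases Finset.mem_insert.1 hws with h1 | h1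
      · simp [h1]
      · exact absurd ((Finset.mem_singleton.1 h1) ▸ hvY.1) hw.2
    · simp only [Finset.singleton_subset_iff, Finset.mem_sdiff]
      exact ⟨hu1, hu2⟩
  · apply Finset.Subset.antisymm
    · intro w hw
      rw [Finset.mem_sdiff] at hw
      have hws : w ∈ symmDiff X Y := by
        rw [Finset.mem_symmDiff]; exact Or.inr hw
      rw [hs] at hws
      rcases Finset.mem_insert.1 hws with h1 | h1
      · exact absurd (h1 ▸ hu1) hw.2
      · exact h1
    · simp only [Finset.singleton_subset_iff, Finset.mem_sdiff]
      exact ⟨hvY.1, hvY.2⟩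

lemma adj_struct [DecidableEq V] {G : SimpleGraph V} {X Y : {S : Finset V // IsISet G S}}
    (h : (iGraph G).Adj X Y) :
    ∃ x y, G.Adj x y ∧ X.1 \ Y.1 = {x} ∧ Y.1 \ X.1 = {y} := by
  obtain ⟨x, y, hxy, hs⟩ := h
  have hx : x ∈ symmDiff X.1 Y.1 := by rw [hs]; simp
  rw [Finset.mem_symmDiff] at hx
  rcases hx with ⟨hx1, hx2⟩ | ⟨hx1, hx2⟩
  · obtain ⟨h1, h2⟩ := adj_struct_aux X.2.1.1 hxy hs hx1 hx2
    exact ⟨x, y, hxy, h1, h2⟩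
  · have hs' : symmDiff Y.1 X.1 = {x, y} := by rwa [symmDiff_comm]
    obtain ⟨h1, h2⟩ := adj_struct_aux Y.2.1.1 hxy hs' hx1 hx2
    exact ⟨y, x, hxy.symm, h2, h1⟩

lemma apex [DecidableEq V] {G : SimpleGraph V} {C D A : {S : Finset V // IsISet G S}}
    {c d : V} (hcd : G.Adj c d) (hC : C.1 \ D.1 = {c}) (hD : D.1 \ C.1 = {d})
    (hAC : (iGraph G).Adj A C) (hAD : (iGraph G).Adj A D) :
    ∃ a, a ∉ C.1 ∧ a ∉ D.1 ∧ G.Adj a c ∧ G.Adj a d ∧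
      A.1 = insert a (C.1 ∩ D.1) := by
  obtain ⟨x, y, hxy, hACd, hCAd⟩ := adj_struct hAC
  obtain ⟨x', y', hx'y', hADd, hDAd⟩ := adj_struct hAD
  have hcC : c ∈ C.1 ∧ c ∉ D.1 := by
    have : c ∈ C.1 \ D.1 := hC ▸ Finset.mem_singleton_self c
    exact Finset.mem_sdiff.1 this
  have hdD : d ∈ D.1 ∧ d ∉ C.1 := by
    have : d ∈ D.1 \ C.1 := hD ▸ Finset.mem_singleton_self d
    exact Finset.mem_sdiff.1 this
  have hyC : y ∈ C.1 ∧ y ∉ A.1 := by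
    have : y ∈ C.1 \ A.1 := hCAd ▸ Finset.mem_singleton_self y
    exact Finset.mem_sdiff.1 this
  have hxA : x ∈ A.1 ∧ x ∉ C.1 := by
    have : x ∈ A.1 \ C.1 := hACd ▸ Finset.mem_singleton_self x
    exact Finset.mem_sdiff.1 this
  have hy'D : y' ∈ D.1 ∧ y' ∉ A.1 := by
    have : y' ∈ D.1 \ A.1 := hDAd ▸ Finset.mem_singleton_self y'
    exact Finset.mem_sdiff.1 this
  have hx'A : x' ∈ A.1 ∧ x' ∉ D.1 := by
    have : x' ∈ A.1 \ D.1 := hADd ▸ Finset.mem_singleton_self x'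
    exact Finset.mem_sdiff.1 this
  by_cases hyD : y ∈ D.1
  · -- degenerate case: both c and d end up in A, contradiction
    exfalso
    have hy' : y' = y := by
      have : y ∈ D.1 \ A.1 := Finset.mem_sdiff.2 ⟨hyD, hyC.2⟩
      rw [hDAd] at this
      exact (Finset.mem_singleton.1 this).symm
    have hcA : c ∈ A.1 := by
      by_contra hc
      have : c ∈ C.1 \ A.1 := Finset.mem_sdiff.2 ⟨hcC.1, hc⟩
      rw [hCAd, Finset.mem_singleton] at this
      exact hcC.2 (this ▸ hyD)
    have hdA : d ∈ A.1 := by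
      by_contra hd
      have : d ∈ D.1 \ A.1 := Finset.mem_sdiff.2 ⟨hdD.1, hd⟩
      rw [hDAd, Finset.mem_singleton, hy'] at this
      exact hdD.2 (this ▸ hyC.1)
    exact A.2.1.1 hcA hdA hcd
  · -- main case: y = c, y' = d, x = x'
    have hyc : y = c := by
      have : y ∈ C.1 \ D.1 := Finset.mem_sdiff.2 ⟨hyC.1, hyD⟩
      rw [hC] at this; exact Finset.mem_singleton.1 this
    have hy'd : y' = d := by
      have hy'C : y' ∉ C.1 := by
        intro hc
        have : y' ∈ C.1 \ A.1 := Finset.mem_sdiff.2 ⟨hc, hy'D.2⟩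
        rw [hCAd, Finset.mem_singleton] at this
        exact hcC.2 ((this.trans hyc) ▸ hy'D.1)
      have : y' ∈ D.1 \ C.1 := Finset.mem_sdiff.2 ⟨hy'D.1, hy'C⟩
      rw [hD] at this; exact Finset.mem_singleton.1 this
    have hxD : x ∉ D.1 := by
      intro hxd
      have hxdC : x ∈ D.1 \ C.1 := Finset.mem_sdiff.2 ⟨hxd, hxA.2⟩
      rw [hD, Finset.mem_singleton] at hxdC
      have hdnA : d ∉ A.1 := hy'd ▸ hy'D.2
      exact hdnA (hxdC ▸ hxA.1)
    have hxx' : x = x' := by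
      have : x ∈ A.1 \ D.1 := Finset.mem_sdiff.2 ⟨hxA.1, hxD⟩
      rw [hADd] at this; exact Finset.mem_singleton.1 this
    refine ⟨x, hxA.2, hxD, hyc ▸ hxy, hy'd ▸ hxx' ▸ hx'y', ?_⟩
    ext v
    simp only [Finset.mem_insert, Finset.mem_inter]
    constructor
    · intro hv
      by_cases hva : v = x
      · exact Or.inl hva
      · right
        constructor
        · by_contra hvC
          have : v ∈ A.1 \ C.1 := Finset.mem_sdiff.2 ⟨hv, hvC⟩
          rw [hACd] at this
          exact hva (Finset.mem_singleton.1 this)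
        · by_contra hvD
          have : v ∈ A.1 \ D.1 := Finset.mem_sdiff.2 ⟨hv, hvD⟩
          rw [hADd] at this
          exact hva ((Finset.mem_singleton.1 this).trans hxx'.symm)
    · rintro (rfl | ⟨hvC, hvD⟩)
      · exact hxA.1
      · by_contra hvA
        have : v ∈ C.1 \ A.1 := Finset.mem_sdiff.2 ⟨hvC, hvA⟩
        rw [hCAd, Finset.mem_singleton, hyc] at this
        exact hcC.2 (this ▸ hvD)

/-- No graph has the diamond `K₄ − e` as its `i`-graph. -/
theorem diamond_not_iGraph :
    ∀ (V : Type) [Fintype V] [DecidableEq V] (G : SimpleGraph V),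
      IsEmpty (iGraph G ≃g diamondGraph) := by
  intro V _ _ G
  constructor
  intro e
  set A := e.symm 0 with hA0
  set B := e.symm 1 with hB1
  set C := e.symm 2 with hC2
  set D := e.symm 3 with hD3
  have dnadj : ¬ diamondGraph.Adj 0 1 := by simp [diamondGraph, Sym2.eq_iff]
  have hCD : (iGraph G).Adj C D := e.symm.map_rel_iff.2 (by simp [diamondGraph])
  have hAC : (iGraph G).Adj A C := e.symm.map_rel_iff.2 (by simp [diamondGraph])
  have hAD : (iGraph G).Adj A D := e.symm.map_rel_iff.2 (by simp [diamondGraph])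
  have hBC : (iGraph G).Adj B C := e.symm.map_rel_iff.2 (by simp [diamondGraph])
  have hBD : (iGraph G).Adj B D := e.symm.map_rel_iff.2 (by simp [diamondGraph])
  have hAB : ¬ (iGraph G).Adj A B := fun h => dnadj (e.symm.map_rel_iff.1 h)
  obtain ⟨c, d, hcd, hC, hD⟩ := adj_struct hCD
  obtain ⟨a, haC, haD, hac, had, ha⟩ := apex hcd hC hD hAC hAD
  obtain ⟨b, hbC, hbD, hbc, hbd, hb⟩ := apex hcd hC hD hBC hBD
  have hANB : A ≠ B := by
    intro h
    have := e.symm.injective (hA0 ▸ hB1 ▸ h)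
    exact absurd this (by decide)
  have hab : a ≠ b := by
    intro h
    exact hANB (Subtype.ext (ha.trans (h ▸ hb.symm)))
  by_cases habAdj : G.Adj a b
  · apply hAB
    refine ⟨a, b, habAdj, ?_⟩
    ext v
    rw [Finset.mem_symmDiff]
    simp only [ha, hb, Finset.mem_insert, Finset.mem_inter, Finset.mem_singleton]
    constructor
    · rintro (⟨h1, h2⟩ | ⟨h1, h2⟩)
      · rcases h1 with rfl | ⟨h3, h4⟩
        · exact Or.inl rfl
        · exact absurd (Or.inr ⟨h3, h4⟩) h2
      · rcases h1 with rfl | ⟨h3, h4⟩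
        · exact Or.inr rfl
        · exact absurd (Or.inr ⟨h3, h4⟩) h2
    · rintro (rfl | rfl)
      · exact Or.inl ⟨Or.inl rfl, by
          rintro (rfl | ⟨h3, h4⟩)
          · exact hab rfl
          · exact haC h3⟩
      · exact Or.inr ⟨Or.inl rfl, by
          rintro (rfl | ⟨h3, h4⟩)
          · exact hab rfl
          · exact hbC h3⟩
  · -- B fails to dominate a
    have haB : a ∉ B.1 := by
      rw [hb]
      simp only [Finset.mem_insert, Finset.mem_inter]
      rintro (rfl | ⟨h3, h4⟩)
      · exact hab rfl
      · exact haC h3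
    obtain ⟨u, hu, huadj⟩ := B.2.1.2 a haB
    rw [hb, Finset.mem_insert] at hu
    rcases hu with rfl | hu
    · exact habAdj huadj.symm
    · have huA : u ∈ A.1 := by
        rw [ha]; exact Finset.mem_insert_of_mem hu
      have haA : a ∈ A.1 := by rw [ha]; exact Finset.mem_insert_self a _
      exact A.2.1.1 huA haA huadj
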